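/- Let ϑ: (G,P) → (G',P') be a controlled map between quasi-lattice ordered groups. If p, q ∈ P have a common upper bound in P and ϑ(p) = ϑ(q), then p = q. -/
import Mathlib


/-- A quasi-lattice ordered group structure on a group `G`: a positive cone `P`
(submonoid with `P ∩ P⁻¹ = {1}`) such that any two elements of `P` with a common
upper bound (for the left-invariant order `g ≤ h ↔ g⁻¹ * h ∈ P`) have a least
common upper bound in `P`. -/
structure QuasiLattice (G : Type*) [Group G] where
  P : Set G
  one_mem : (1 : G) ∈ P
  mul_mem : ∀ {a b : G}, a ∈ P → b ∈ P → a * b ∈ P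
  antisymm' : ∀ g ∈ P, g⁻¹ ∈ P → g = 1
  lub_exists : ∀ p ∈ P, ∀ q ∈ P,
    (∃ r ∈ P, p⁻¹ * r ∈ P ∧ q⁻¹ * r ∈ P) →
    ∃ r ∈ P, p⁻¹ * r ∈ P ∧ q⁻¹ * r ∈ P ∧
      ∀ s ∈ P, p⁻¹ * s ∈ P → q⁻¹ * s ∈ P → r⁻¹ * s ∈ P

namespace QuasiLattice

variable {G G' : Type*} [Group G] [Group G']

/-- The left-invariant partial order induced by the positive cone. -/
def le (Q : QuasiLattice G) (g h : G) : Prop := g⁻¹ * h ∈ Q.P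

/-- `p` and `q` have a common upper bound in `P` (i.e. `p ∨ q < ∞`). -/
def HasCUB (Q : QuasiLattice G) (p q : G) : Prop := ∃ r ∈ Q.P, Q.le p r ∧ Q.le q r

/-- `r` is the least common upper bound of `p` and `q` in `P`. -/
def IsLub (Q : QuasiLattice G) (p q r : G) : Prop :=
  r ∈ Q.P ∧ Q.le p r ∧ Q.le q r ∧ ∀ s ∈ Q.P, Q.le p s → Q.le q s → Q.le r s

end QuasiLattice

/-- A controlled map between quasi-lattice ordered groups: an order-preserving group
homomorphism, finite-to-one on `P`, respecting least upper bounds. -/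
structure ControlledMap {G G' : Type*} [Group G] [Group G']
    (Q : QuasiLattice G) (Q' : QuasiLattice G') where
  toFun : G →* G'
  mapsP : ∀ p ∈ Q.P, toFun p ∈ Q'.P
  finite_fibers : ∀ g' : G', {p | p ∈ Q.P ∧ toFun p = g'}.Finite
  map_lub : ∀ p ∈ Q.P, ∀ q ∈ Q.P, ∀ r, Q.IsLub p q r →
    Q'.IsLub (toFun p) (toFun q) (toFun r)

namespace ControlledMap

variable {G G' : Type*} [Group G] [Group G'] {Q : QuasiLattice G} {Q' : QuasiLattice G'}

/-- `p` is a minimal element of `ϑ⁻¹([m,∞]) ∩ P`. -/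
def Minimal (θ : ControlledMap Q Q') (m : G') (p : G) : Prop :=
  p ∈ Q.P ∧ Q'.le m (θ.toFun p) ∧
    ∀ r ∈ Q.P, Q'.le m (θ.toFun r) → Q.le r p → r = p

/-- The minimality property of a controlled map: distinct minimal elements of
`ϑ⁻¹([m,∞]) ∩ P` have no common upper bound in `P`. -/
def MinimalityProperty (θ : ControlledMap Q Q') : Prop :=
  ∀ m ∈ Q'.P, ∀ p q : G, θ.Minimal m p → θ.Minimal m q → p ≠ q → ¬ Q.HasCUB p q

end ControlledMap

/-- The quasi-lattice ordered group `(ℤ^κ, ℤ₊^κ)` (written multiplicatively). -/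
def ZQL (κ : Type*) : QuasiLattice (Multiplicative (κ → ℤ)) where
  P := {x | ∀ i, 0 ≤ Multiplicative.toAdd x i}
  one_mem := fun i => le_refl 0
  mul_mem := fun {a b} ha hb i => add_nonneg (ha i) (hb i)
  antisymm' := fun g hg hg' => by
    have h : ∀ i, Multiplicative.toAdd g i = 0 := fun i => by
      have h1 := hg i
      have h2 := hg' i
      simp only [toAdd_inv, Pi.neg_apply] at h2
      omega
    have : Multiplicative.toAdd g = 0 := funext h
    simpa using this
  lub_exists := fun p hp q hq _ => by
    refine ⟨Multiplicative.ofAdd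
      (fun i => max (Multiplicative.toAdd p i) (Multiplicative.toAdd q i)), ?_, ?_, ?_, ?_⟩
    · intro i
      have := hp i
      simp only [toAdd_ofAdd]
      omega
    · intro i
      simp only [toAdd_mul, toAdd_inv, Pi.add_apply,
        Pi.neg_apply, toAdd_ofAdd]
      omega
    · intro i
      simp only [toAdd_mul, toAdd_inv, Pi.add_apply,
        Pi.neg_apply, toAdd_ofAdd]
      omega
    · intro s _ hps hqs i
      have h1 := hps i
      have h2 := hqs i
      simp only [toAdd_mul, toAdd_inv, Pi.add_apply,
        Pi.neg_apply, toAdd_ofAdd] at h1 h2 ⊢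
      omega

theorem aux_pow_mem {G : Type*} [Group G] (Q : QuasiLattice G) {a : G} (ha : a ∈ Q.P) :
    ∀ n : ℕ, a ^ n ∈ Q.P := by
  intro n
  induction n with
  | zero => simpa using Q.one_mem
  | succ k ih => rw [pow_succ]; exact Q.mul_mem ih ha

theorem aux_trivial_kernel {G G' : Type*} [Group G] [Group G']
    {Q : QuasiLattice G} {Q' : QuasiLattice G'} (θ : ControlledMap Q Q')
    {a : G} (ha : a ∈ Q.P) (h1 : θ.toFun a = 1) : a = 1 := by
  by_contra hne
  have hinj : Function.Injective (fun n : ℕ => a ^ n) := by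
    intro n m hnm
    simp only at hnm
    by_contra hne'
    wlog hlt : n < m generalizing n m
    · exact this hnm.symm (Ne.symm hne') (by omega)
    have hk : a ^ (m - n) = 1 := by
      have : a ^ n * a ^ (m - n) = a ^ n * 1 := by
        rw [mul_one, ← pow_add, hnm]
        congr 1
        omega
      exact mul_left_cancel this
    have hpos : 0 < m - n := by omega
    have : a⁻¹ = a ^ (m - n - 1) := by
      have : a ^ (m - n - 1) * a = 1 := by
        rw [← pow_succ]
        convert hk using 2
        omega
      exact (eq_inv_of_mul_eq_one_left this).symm
    have hainv : a⁻¹ ∈ Q.P := this ▸ aux_pow_mem Q ha (m - n - 1)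
    exact hne (Q.antisymm' a ha hainv)
  have hfin := θ.finite_fibers 1
  have : Set.Infinite {p | p ∈ Q.P ∧ θ.toFun p = 1} := by
    apply Set.infinite_of_injective_forall_mem hinj
    intro n
    exact ⟨aux_pow_mem Q ha n, by rw [map_pow, h1, one_pow]⟩
  exact this hfin

/-- (C5) If `ϑ : (G,P) → (G',P')` is a controlled map between
quasi-lattice ordered groups, `p, q ∈ P` have a common upper bound in `P`, and
`ϑ(p) = ϑ(q)`, then `p = q`. -/
theorem controlledMap_eq_of_eq {G G' : Type*} [Group G] [Group G']
    {Q : QuasiLattice G} {Q' : QuasiLattice G'} (θ : ControlledMap Q Q')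
    {p q : G} (hp : p ∈ Q.P) (hq : q ∈ Q.P) (hcub : Q.HasCUB p q)
    (heq : θ.toFun p = θ.toFun q) : p = q := by
  obtain ⟨r, hr, hpr, hqr, hlub⟩ := Q.lub_exists p hp q hq hcub
  have hislub : Q.IsLub p q r := ⟨hr, hpr, hqr, hlub⟩
  obtain ⟨hr', hpr', hqr', hlub'⟩ := θ.map_lub p hp q hq r hislub
  -- θ(r) ≤ θ(p): θ(p) is a common upper bound of θ(p), θ(q)
  have hone : (θ.toFun p)⁻¹ * θ.toFun p ∈ Q'.P := by simpa using Q'.one_mem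
  have hrp : Q'.le (θ.toFun r) (θ.toFun p) :=
    hlub' (θ.toFun p) (θ.mapsP p hp) hone (by rw [← heq]; exact hone)
  -- hence θ(p)⁻¹θ(r) = 1
  have h1 : (θ.toFun p)⁻¹ * θ.toFun r = 1 := by
    apply Q'.antisymm' _ hpr'
    simpa [QuasiLattice.le, mul_assoc] using hrp
  -- p⁻¹r ∈ P maps to 1, so p⁻¹r = 1
  have hp1 : p⁻¹ * r = 1 := by
    apply aux_trivial_kernel θ hpr
    simpa using h1
  have hq1 : q⁻¹ * r = 1 := by
    apply aux_trivial_kernel θ hqr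
    simp only [map_mul, map_inv]
    rw [← heq]
    simpa using h1
  have : p = r := by
    have := mul_eq_one_iff_eq_inv.mp hp1
    simpa [eq_comm] using (inv_eq_iff_eq_inv.mp this).symm
  have hq' : q = r := by
    have := mul_eq_one_iff_eq_inv.mp hq1
    simpa [eq_comm] using (inv_eq_iff_eq_inv.mp this).symm
  rw [this, hq']
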